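/- In the reduction from Multicolored Clique constructed as follows: for each vertex i of G introduce a clique U = ∪_i U_i where U_i = {u_{iℓ} : ℓ ∈ [k] \ {χ(i)}}, and for each edge ij of G add vertices x_{ij}, x'_{ij}, y_{ij}, y'_{ij} with edges from U_i ∪ U_j to x_{ij} and to y_{ij}, edges x_{ij}x'_{ij}, y_{ij}y'_{ij}, x'_{ij}u_{iχ(j)}, y'_{ij}u_{jχ(i)} — if G has a multicolored clique S of size k, then setting X_B = ∪_{i,j ∈ S, i≠j} {x_{ij}, x'_{ij}, y_{ij}, y'_{ij}}, X_C = ∪_{i∈S} U_i, and X_R the remaining vertices yields a 1-tight odd cycle cut of width k(k−1) in the constructed graph G'. -/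

import Mathlib

open SimpleGraph

/-- `S` is an odd cycle transversal of `G`: removing `S` leaves a bipartite graph. -/
def IsOCT {W : Type*} (G : SimpleGraph W) (S : Set W) : Prop :=
  (G.induce Sᶜ).Colorable 2

/-- The minimum size of an odd cycle transversal of `G`. -/
noncomputable def oct {W : Type*} (G : SimpleGraph W) : ℕ :=
  sInf {n | ∃ S : Set W, S.ncard = n ∧ IsOCT G S}

/-- `(XB, XC, XR)` is an odd cycle cut of `G`. -/
def IsOCC {V : Type*} (G : SimpleGraph V) (XB XC XR : Set V) : Prop :=
  XB ∪ XC ∪ XR = Set.univ ∧ Disjoint XB XC ∧ Disjoint XB XR ∧ Disjoint XC XR ∧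
  (G.induce XB).Colorable 2 ∧
  (∀ u ∈ XB, ∀ v ∈ XR, ¬ G.Adj u v) ∧
  (XB ∪ XC).Nonempty

/-- `H` is an `XC`-certificate of order `z` in `G`. -/
def IsCert {V : Type*} (G : SimpleGraph V) (H : G.Subgraph) (XC : Set V) (z : ℕ) : Prop :=
  XC ⊆ H.verts ∧
  IsOCT H.coe {x : ↥H.verts | (x : V) ∈ XC} ∧
  (∀ S : Set ↥H.verts, IsOCT H.coe S → XC.ncard ≤ S.ncard) ∧
  ∀ v : ↥H.verts, {u : ↥H.verts | H.coe.Reachable u v ∧ (u : V) ∈ XC}.ncard ≤ z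

/-- `(AB, AC, AR)` is a `z`-tight odd cycle cut of `G`: a tight OCC
(`|AC| = oct(G[AC ∪ AB])`) such that `G[AC ∪ AB]` contains an `AC`-certificate of
order `z`. -/
def IsZTightOCC {V : Type*} (G : SimpleGraph V) (AB AC AR : Set V) (z : ℕ) : Prop :=
  IsOCC G AB AC AR ∧ AC.ncard = oct (G.induce (AC ∪ AB)) ∧
  ∃ H : G.Subgraph, H.verts ⊆ AC ∪ AB ∧ IsCert G H AC z


/-- The symmetrized adjacency relation of the graph `G'` built in the reduction from
Multicolored Clique: vertices `Sum.inl (i, ℓ)` are the clique vertices `u_{iℓ}`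
(valid when `ℓ ≠ χ i`), and vertices `Sum.inr (a, b, 0)`, `Sum.inr (a, b, 1)` are the
gadget vertices `x_{ab}`, `x'_{ab}` for the oriented edge `(a, b)` (so `(b, a, 0/1)`
are `y_{ab}`, `y'_{ab}`).  All `u`-vertices form a clique; for each edge `ab` of `G`,
`x_{ab}` is adjacent to `U_a ∪ U_b`, to `x'_{ab}`, and `x'_{ab}` is adjacent to
`u_{a χ(b)}`. -/
def gadgetRel {V : Type} {k : ℕ} (G : SimpleGraph V) (χ : V → Fin k) :
    ((V × Fin k) ⊕ (V × V × Fin 2)) → ((V × Fin k) ⊕ (V × V × Fin 2)) → Prop :=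
  fun x y =>
    match x, y with
    | Sum.inl (i, ℓ), Sum.inl (i', ℓ') => ℓ ≠ χ i ∧ ℓ' ≠ χ i'
    | Sum.inl (i, ℓ), Sum.inr (a, b, c) => ℓ ≠ χ i ∧ G.Adj a b ∧
        ((c = 0 ∧ (i = a ∨ i = b)) ∨ (c = 1 ∧ i = a ∧ ℓ = χ b))
    | Sum.inr (a, b, _), Sum.inr (a', b', _) => G.Adj a b ∧ a = a' ∧ b = b'
    | _, _ => False

section AuxOCC
variable {V : Type} {k : ℕ}

/-- 2-coloring candidate on the gadget vertex type. -/
def colW : ((V × Fin k) ⊕ (V × V × Fin 2)) → Fin 2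
  | Sum.inl _ => 0
  | Sum.inr (_, _, c) => c

/-- the "pair" of a vertex, given a representative function `f` of colors of `S`. -/
def pairOf (f : Fin k → V) : ((V × Fin k) ⊕ (V × V × Fin 2)) → V × V
  | Sum.inl (a, ℓ) => (a, f ℓ)
  | Sum.inr (a, b, _) => (a, b)

lemma not_colorable_two {W' : Type*} (K : SimpleGraph W') {x y z : W'}
    (hxy : K.Adj x y) (hyz : K.Adj y z) (hxz : K.Adj x z) : ¬ K.Colorable 2 := by
  rintro ⟨C⟩
  have h1 : (C x).val ≠ (C y).val := fun h => C.valid hxy (Fin.ext h)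
  have h2 : (C y).val ≠ (C z).val := fun h => C.valid hyz (Fin.ext h)
  have h3 : (C x).val ≠ (C z).val := fun h => C.valid hxz (Fin.ext h)
  have := (C x).isLt; have := (C y).isLt; have := (C z).isLt
  omega

lemma colW_ne (G : SimpleGraph V) (χ : V → Fin k)
    {x y : (V × Fin k) ⊕ (V × V × Fin 2)}
    (h : (SimpleGraph.fromRel (gadgetRel G χ)).Adj x y)
    (hx : ∃ t, x = Sum.inr t) (hy : ∃ t, y = Sum.inr t) :
    colW x ≠ colW y := by
  obtain ⟨⟨a, b, c⟩, rfl⟩ := hx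
  obtain ⟨⟨a', b', c'⟩, rfl⟩ := hy
  rw [SimpleGraph.fromRel_adj] at h
  obtain ⟨hne, h | h⟩ := h <;>
  · obtain ⟨-, rfl, rfl⟩ := h
    simp only [colW, ne_eq]
    intro hc
    exact hne (by rw [hc])
end AuxOCC

section Main
variable {V : Type} [Fintype V] {k : ℕ}

abbrev XBs (G : SimpleGraph V) (S : Set V) : Set ((V × Fin k) ⊕ (V × V × Fin 2)) :=
  Sum.inr '' {t : V × V × Fin 2 | t.1 ∈ S ∧ t.2.1 ∈ S ∧ G.Adj t.1 t.2.1}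

abbrev XCs (χ : V → Fin k) (S : Set V) : Set ((V × Fin k) ⊕ (V × V × Fin 2)) :=
  Sum.inl '' {p : V × Fin k | p.1 ∈ S ∧ p.2 ≠ χ p.1}

/-- The certificate subgraph: disjoint triangles, one for each pair. -/
def certH (G : SimpleGraph V) (χ : V → Fin k) (S : Set V) (f : Fin k → V) :
    (SimpleGraph.fromRel (gadgetRel G χ)).Subgraph where
  verts := XCs χ S ∪ XBs G S
  Adj x y := (SimpleGraph.fromRel (gadgetRel G χ)).Adj x y ∧
    x ∈ XCs χ S ∪ XBs G S ∧ y ∈ XCs χ S ∪ XBs G S ∧ pairOf f x = pairOf f y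
  adj_sub h := h.1
  edge_vert h := h.2.1
  symm := ⟨fun x y h => ⟨h.1.symm, h.2.2.1, h.2.1, h.2.2.2.symm⟩⟩

variable {G : SimpleGraph V} {χ : V → Fin k} {S : Set V} {f : Fin k → V}

section Tri
variable (hχ : ∀ u v : V, G.Adj u v → χ u ≠ χ v)
  (hclique : ∀ u ∈ S, ∀ v ∈ S, u ≠ v → G.Adj u v)
  (hf1 : ∀ ℓ, f ℓ ∈ S) (hf2 : ∀ ℓ, χ (f ℓ) = ℓ)

include hχ hclique hf1 hf2 in
lemma certH_triangle {a : V} {ℓ : Fin k} (ha : a ∈ S) (hℓ : ℓ ≠ χ a) :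
    (certH G χ S f).Adj (Sum.inl (a, ℓ)) (Sum.inr (a, f ℓ, 0)) ∧
    (certH G χ S f).Adj (Sum.inl (a, ℓ)) (Sum.inr (a, f ℓ, 1)) ∧
    (certH G χ S f).Adj (Sum.inr (a, f ℓ, 0)) (Sum.inr (a, f ℓ, 1)) := by
  have hb : f ℓ ∈ S := hf1 ℓ
  have hab : a ≠ f ℓ := by
    intro h; exact hℓ (by rw [h, hf2])
  have hadj : G.Adj a (f ℓ) := hclique a ha (f ℓ) hb hab
  have hC : Sum.inl (a, ℓ) ∈ XCs χ S ∪ XBs G S :=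
    Or.inl ⟨(a, ℓ), ⟨ha, hℓ⟩, rfl⟩
  have hB : ∀ c : Fin 2, Sum.inr (a, f ℓ, c) ∈ XCs χ S ∪ XBs G S :=
    fun c => Or.inr ⟨(a, f ℓ, c), ⟨ha, hb, hadj⟩, rfl⟩
  refine ⟨⟨?_, hC, hB 0, rfl⟩, ⟨?_, hC, hB 1, rfl⟩, ⟨?_, hB 0, hB 1, rfl⟩⟩
  · exact (SimpleGraph.fromRel_adj _ _ _).mpr
      ⟨by simp, Or.inl ⟨hℓ, hadj, Or.inl ⟨rfl, Or.inl rfl⟩⟩⟩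
  · exact (SimpleGraph.fromRel_adj _ _ _).mpr
      ⟨by simp, Or.inl ⟨hℓ, hadj, Or.inr ⟨rfl, rfl, (hf2 ℓ).symm⟩⟩⟩
  · exact (SimpleGraph.fromRel_adj _ _ _).mpr
      ⟨by simp, Or.inl ⟨hadj, rfl, rfl⟩⟩

include hχ hclique hf1 hf2 in
lemma oct_lower_cert (hfu : ∀ v ∈ S, f (χ v) = v)
    (S' : Set ↥((certH G χ S f).verts))
    (hS' : IsOCT (certH G χ S f).coe S') : (XCs χ S).ncard ≤ S'.ncard := by
  classical
  have finj : Function.Injective f := fun ℓ ℓ' h => by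
    rw [← hf2 ℓ, ← hf2 ℓ', h]
  rcases Set.eq_empty_or_nonempty (XCs χ S) with hemp | ⟨u0, hu0⟩
  · simp [hemp]
  haveI : Nonempty ↥((certH G χ S f).verts) := ⟨⟨u0, Or.inl hu0⟩⟩
  have key : ∀ a ℓ, a ∈ S → ℓ ≠ χ a → ∃ x : ↥((certH G χ S f).verts),
      x ∈ S' ∧ ((↑x : (V × Fin k) ⊕ (V × V × Fin 2)) = Sum.inl (a, ℓ) ∨ (↑x : (V × Fin k) ⊕ (V × V × Fin 2)) = Sum.inr (a, f ℓ, 0) ∨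
        (↑x : (V × Fin k) ⊕ (V × V × Fin 2)) = Sum.inr (a, f ℓ, 1)) := by
    intro a ℓ ha hℓ
    by_contra hcon
    push_neg at hcon
    obtain ⟨t1, t2, t3⟩ := certH_triangle hχ hclique hf1 hf2 ha hℓ (f := f)
    set X0 : ↥((certH G χ S f).verts) := ⟨Sum.inl (a, ℓ), t1.2.1⟩ with hX0
    set X1 : ↥((certH G χ S f).verts) := ⟨Sum.inr (a, f ℓ, 0), t1.2.2.1⟩ with hX1
    set X2 : ↥((certH G χ S f).verts) := ⟨Sum.inr (a, f ℓ, 1), t2.2.2.1⟩ with hX2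
    have h0 : X0 ∈ S'ᶜ := fun h => (hcon X0 h).1 rfl
    have h1 : X1 ∈ S'ᶜ := fun h => (hcon X1 h).2.1 rfl
    have h2 : X2 ∈ S'ᶜ := fun h => (hcon X2 h).2.2 rfl
    refine not_colorable_two ((certH G χ S f).coe.induce S'ᶜ)
      (x := ⟨X0, h0⟩) (y := ⟨X1, h1⟩) (z := ⟨X2, h2⟩) ?_ ?_ ?_ hS'
    · exact t1
    · exact t3
    · exact t2
  have key' : ∀ u ∈ XCs χ S, ∃ x : ↥((certH G χ S f).verts), x ∈ S' ∧
      ∃ a ℓ, u = Sum.inl (a, ℓ) ∧ a ∈ S ∧ ℓ ≠ χ a ∧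
        ((↑x : (V × Fin k) ⊕ (V × V × Fin 2)) = Sum.inl (a, ℓ) ∨ (↑x : (V × Fin k) ⊕ (V × V × Fin 2)) = Sum.inr (a, f ℓ, 0) ∨
          (↑x : (V × Fin k) ⊕ (V × V × Fin 2)) = Sum.inr (a, f ℓ, 1)) := by
    rintro u ⟨⟨a, ℓ⟩, ⟨ha, hℓ⟩, rfl⟩
    obtain ⟨x, hx1, hx2⟩ := key a ℓ ha hℓ
    exact ⟨x, hx1, a, ℓ, rfl, ha, hℓ, hx2⟩
  set g : ((V × Fin k) ⊕ (V × V × Fin 2)) → ↥((certH G χ S f).verts) :=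
    fun u => if h : u ∈ XCs χ S then (key' u h).choose else Classical.arbitrary _
    with hgdef
  have hg : ∀ u (h : u ∈ XCs χ S), g u ∈ S' ∧
      ∃ a ℓ, u = Sum.inl (a, ℓ) ∧ a ∈ S ∧ ℓ ≠ χ a ∧
        ((↑(g u) : (V × Fin k) ⊕ (V × V × Fin 2)) = Sum.inl (a, ℓ) ∨ (↑(g u) : (V × Fin k) ⊕ (V × V × Fin 2)) = Sum.inr (a, f ℓ, 0) ∨
          (↑(g u) : (V × Fin k) ⊕ (V × V × Fin 2)) = Sum.inr (a, f ℓ, 1)) := by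
    intro u h
    rw [hgdef]; simp only [dif_pos h]
    exact (key' u h).choose_spec
  refine Set.ncard_le_ncard_of_injOn g (fun u hu => (hg u hu).1) ?_ S'.toFinite
  intro u1 h1 u2 h2 heq
  obtain ⟨a1, ℓ1, rfl, ha1, hl1, hc1⟩ := (hg u1 h1).2
  obtain ⟨a2, ℓ2, rfl, ha2, hl2, hc2⟩ := (hg u2 h2).2
  rw [heq] at hc1
  have hfeq : ∀ (h : f ℓ1 = f ℓ2) (ha : a1 = a2),
      (Sum.inl (a1, ℓ1) : (V × Fin k) ⊕ (V × V × Fin 2)) = Sum.inl (a2, ℓ2) := by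
    intro h ha; rw [ha, finj h]
  rcases hc1 with h | h | h <;> rcases hc2 with h' | h' | h' <;> rw [h] at h'
  all_goals simp only [Sum.inl.injEq, Sum.inr.injEq, Prod.mk.injEq, and_true,
    reduceCtorEq] at h'
  all_goals first
    | exact h'.elim
    | exact absurd h'.2.2 (by decide)
    | exact hfeq h'.2 h'.1
    | rw [h'.1, h'.2]
end Tri
end Main

lemma colorable_of_inr {V : Type} {k : ℕ} {ι : Type*} (G : SimpleGraph V) (χ : V → Fin k)
    (K : SimpleGraph ι) (p : ι → (V × Fin k) ⊕ (V × V × Fin 2))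
    (h1 : ∀ i, ∃ t, p i = Sum.inr t)
    (hadj : ∀ {a b}, K.Adj a b → (SimpleGraph.fromRel (gadgetRel G χ)).Adj (p a) (p b)) :
    K.Colorable 2 :=
  ⟨SimpleGraph.Coloring.mk (fun i => colW (p i))
    (fun h => colW_ne G χ (hadj h) (h1 _) (h1 _))⟩

lemma reach_pairOf {V : Type} {k : ℕ} {G : SimpleGraph V} {χ : V → Fin k} {S : Set V}
    {f : Fin k → V} {u v : ↥((certH G χ S f).verts)}
    (h : (certH G χ S f).coe.Reachable u v) : pairOf f (↑u) = pairOf f (↑v) := by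
  obtain ⟨p⟩ := h
  induction p with
  | nil => rfl
  | cons ha _ ih =>
      have ha' : (certH G χ S f).Adj _ _ := ha
      exact (ha'.2.2.2).trans ih

/-- **Forward direction of the W[1]-hardness reduction.** If `G` (properly colored by
`χ : V → Fin k`) has a multicolored clique `S` of size `k`, then in the constructed
graph `G' = fromRel (gadgetRel G χ)` the sets
`X_B = {x_{ij}, x'_{ij}, y_{ij}, y'_{ij} : i, j ∈ S}`, `X_C = ⋃_{i ∈ S} U_i` and the
remaining vertices `X_R` form a `1`-tight odd cycle cut of width `k(k−1)`. -/
theorem multicolored_clique_gives_tight_occ {V : Type} [Fintype V] [DecidableEq V]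
    {k : ℕ} (hk : 2 ≤ k)
    (G : SimpleGraph V) (χ : V → Fin k)
    (hχ : ∀ u v : V, G.Adj u v → χ u ≠ χ v)
    (S : Set V)
    (hclique : ∀ u ∈ S, ∀ v ∈ S, u ≠ v → G.Adj u v)
    (hmc : ∀ ℓ : Fin k, ∃! v : V, v ∈ S ∧ χ v = ℓ) :
    IsZTightOCC (SimpleGraph.fromRel (gadgetRel G χ))
      (Sum.inr '' {t : V × V × Fin 2 | t.1 ∈ S ∧ t.2.1 ∈ S ∧ G.Adj t.1 t.2.1})
      (Sum.inl '' {p : V × Fin k | p.1 ∈ S ∧ p.2 ≠ χ p.1})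
      ((Sum.inr '' {t : V × V × Fin 2 | t.1 ∈ S ∧ t.2.1 ∈ S ∧ G.Adj t.1 t.2.1} ∪
        Sum.inl '' {p : V × Fin k | p.1 ∈ S ∧ p.2 ≠ χ p.1})ᶜ) 1 ∧
    (Sum.inl '' {p : V × Fin k | p.1 ∈ S ∧ p.2 ≠ χ p.1} :
      Set ((V × Fin k) ⊕ (V × V × Fin 2))).ncard = k * (k - 1) := by
  classical
  choose f hfspec hfuniq using fun ℓ => hmc ℓ
  have hf1 : ∀ ℓ, f ℓ ∈ S := fun ℓ => (hfspec ℓ).1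
  have hf2 : ∀ ℓ, χ (f ℓ) = ℓ := fun ℓ => (hfspec ℓ).2
  have hfu : ∀ v ∈ S, f (χ v) = v := fun v hv => (hfuniq (χ v) v ⟨hv, rfl⟩).symm
  have finj : Function.Injective f := fun ℓ ℓ' h => by rw [← hf2 ℓ, ← hf2 ℓ', h]
  set G' := SimpleGraph.fromRel (gadgetRel G χ) with hG'
  set XB := (Sum.inr '' {t : V × V × Fin 2 | t.1 ∈ S ∧ t.2.1 ∈ S ∧ G.Adj t.1 t.2.1} :
    Set ((V × Fin k) ⊕ (V × V × Fin 2))) with hXB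
  set XC := (Sum.inl '' {p : V × Fin k | p.1 ∈ S ∧ p.2 ≠ χ p.1} :
    Set ((V × Fin k) ⊕ (V × V × Fin 2))) with hXC
  have hXBeq : XB = XBs G S := rfl
  have hXCeq : XC = XCs χ S := rfl
  -- membership shapes
  have memXB_inr : ∀ x ∈ XB, ∃ t, x = Sum.inr t := by
    rintro x ⟨t, -, rfl⟩; exact ⟨t, rfl⟩
  -- pairOf is injective on XC
  have pinj : ∀ u1 ∈ XC, ∀ u2 ∈ XC, pairOf f u1 = pairOf f u2 → u1 = u2 := by
    rintro _ ⟨⟨a1, ℓ1⟩, -, rfl⟩ _ ⟨⟨a2, ℓ2⟩, -, rfl⟩ h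
    simp only [pairOf, Prod.mk.injEq] at h
    rw [h.1, finj h.2]
  -- the cardinality of XC
  have hXCcard : XC.ncard = k * (k - 1) := by
    rw [hXC, Set.ncard_image_of_injective _ Sum.inl_injective]
    have e : {p : V × Fin k | p.1 ∈ S ∧ p.2 ≠ χ p.1} ≃
        {q : Fin k × Fin k | q.1 ≠ q.2} :=
      { toFun := fun p => ⟨(χ p.1.1, p.1.2), fun h => p.2.2 h.symm⟩
        invFun := fun q => ⟨(f q.1.1, q.1.2), ⟨hf1 _, by
          rw [hf2]; exact fun h => q.2 h.symm⟩⟩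
        left_inv := fun p => by
          apply Subtype.ext
          exact Prod.ext (hfu _ p.2.1) rfl
        right_inv := fun q => by
          apply Subtype.ext
          exact Prod.ext (hf2 _) rfl }
    have h1 : {p : V × Fin k | p.1 ∈ S ∧ p.2 ≠ χ p.1}.ncard =
        {q : Fin k × Fin k | q.1 ≠ q.2}.ncard := by
      rw [← Nat.card_coe_set_eq, ← Nat.card_coe_set_eq]
      exact Nat.card_congr e
    have h2 : {q : Fin k × Fin k | q.1 ≠ q.2}.toFinset = Finset.univ.offDiag := by
      ext q; simp [Finset.mem_offDiag]
    have h3 : k * k - k = k * (k - 1) := by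
      obtain ⟨m, rfl⟩ : ∃ m, k = m + 1 := ⟨k - 1, by omega⟩
      rw [Nat.succ_sub_one, Nat.mul_succ, Nat.add_sub_cancel]
    rw [h1, Set.ncard_eq_toFinset_card', h2, Finset.offDiag_card, Finset.card_univ,
      Fintype.card_fin, h3]
  -- the distinguished OCT of the induced graph
  set XCsub := {x : ↥(XC ∪ XB) | (x : (V × Fin k) ⊕ (V × V × Fin 2)) ∈ XC} with hXCsub
  have hXCsub_card : XCsub.ncard = XC.ncard := by
    have himg : XC = Subtype.val '' XCsub := by
      ext u
      constructor
      · intro hu; exact ⟨⟨u, Or.inl hu⟩, hu, rfl⟩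
      · rintro ⟨x, hx, rfl⟩; exact hx
    conv_rhs => rw [himg]
    rw [Set.ncard_image_of_injective _ Subtype.val_injective]
  have hOCTind : IsOCT (G'.induce (XC ∪ XB)) XCsub := by
    refine colorable_of_inr G χ _ (fun y : ↥(XCsubᶜ) => ((y : ↥(XC ∪ XB)) :
      (V × Fin k) ⊕ (V × V × Fin 2))) ?_ ?_
    · intro y
      have hy : ((y : ↥(XC ∪ XB)) : (V × Fin k) ⊕ (V × V × Fin 2)) ∈ XC ∪ XB :=
        (y : ↥(XC ∪ XB)).2
      rcases hy with h | h
      · exact absurd h y.2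
      · exact memXB_inr _ h
    · intro a b h
      exact h
  -- monotonicity : an OCT of the induced graph is an OCT of certH.coe
  have hmono : ∀ S' : Set ↥((certH G χ S f).verts),
      IsOCT (G'.induce (XC ∪ XB)) S' → IsOCT (certH G χ S f).coe S' := by
    intro S' hS'
    have hC : ((G'.induce (XC ∪ XB)).induce S'ᶜ).Colorable 2 := hS'
    obtain ⟨C⟩ := hC
    exact ⟨SimpleGraph.Coloring.mk C (fun {a b} hab => C.valid
      (show G'.Adj _ _ from hab.1))⟩
  have hoctlow : ∀ S' : Set ↥((certH G χ S f).verts),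
      IsOCT (certH G χ S f).coe S' → XC.ncard ≤ S'.ncard := by
    intro S' hS'
    rw [hXCeq]
    exact oct_lower_cert hχ hclique hf1 hf2 hfu S' hS'
  -- the oct computation
  have hoct : XC.ncard = oct (G'.induce (XC ∪ XB)) := by
    have hA : XC.ncard ∈ {n | ∃ T : Set ↥(XC ∪ XB), T.ncard = n ∧
        IsOCT (G'.induce (XC ∪ XB)) T} := ⟨XCsub, hXCsub_card, hOCTind⟩
    refine le_antisymm ?_ (Nat.sInf_le hA)
    refine le_csInf ⟨_, hA⟩ ?_
    rintro n ⟨T, rfl, hT⟩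
    exact hoctlow T (hmono T hT)
  -- the OCC structure
  have hocc : IsOCC G' XB XC ((XB ∪ XC)ᶜ) := by
    refine ⟨Set.union_compl_self _, ?_, ?_, ?_, ?_, ?_, ?_⟩
    · rw [Set.disjoint_left]
      rintro _ ⟨t, -, rfl⟩ ⟨p, -, h⟩
      exact Sum.inl_ne_inr h
    · exact Set.disjoint_left.mpr fun _ ha hR => hR (Or.inl ha)
    · exact Set.disjoint_left.mpr fun _ ha hR => hR (Or.inr ha)
    · refine colorable_of_inr G χ _
        (fun y : ↥XB => (y : (V × Fin k) ⊕ (V × V × Fin 2))) ?_ ?_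
      · intro y; exact memXB_inr _ y.2
      · intro a b h; exact h
    · rintro _ ⟨⟨a, b, c⟩, ⟨haS, hbS, hab⟩, rfl⟩ v hv hadj
      apply hv
      rw [SimpleGraph.fromRel_adj] at hadj
      obtain ⟨hne, h | h⟩ := hadj
      · cases v with
        | inl p => exact h.elim
        | inr t =>
          obtain ⟨a', b', c'⟩ := t
          obtain ⟨-, rfl, rfl⟩ := h
          exact Or.inl ⟨(a, b, c'), ⟨haS, hbS, hab⟩, rfl⟩
      · cases v with
        | inl p =>
          obtain ⟨i, ℓ⟩ := p
          obtain ⟨hℓ, -, hcase⟩ := h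
          have hi : i ∈ S := by
            rcases hcase with ⟨-, rfl | rfl⟩ | ⟨-, rfl, -⟩ <;> assumption
          exact Or.inr ⟨(i, ℓ), ⟨hi, hℓ⟩, rfl⟩
        | inr t =>
          obtain ⟨a', b', c'⟩ := t
          obtain ⟨-, rfl, rfl⟩ := h
          exact Or.inl ⟨(a', b', c'), ⟨haS, hbS, hab⟩, rfl⟩
    · refine ⟨Sum.inl (f ⟨0, by omega⟩, ⟨1, by omega⟩), Or.inr
        ⟨(f ⟨0, by omega⟩, ⟨1, by omega⟩), ⟨hf1 _, ?_⟩, rfl⟩⟩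
      rw [hf2]
      simp
  -- the certificate
  have hcert : IsCert G' (certH G χ S f) XC 1 := by
    refine ⟨?_, ?_, ?_, ?_⟩
    · exact fun x hx => Or.inl hx
    · refine colorable_of_inr G χ _
        (fun y : ↥({x : ↥((certH G χ S f).verts) |
          (x : (V × Fin k) ⊕ (V × V × Fin 2)) ∈ XC}ᶜ) =>
          ((y : ↥((certH G χ S f).verts)) : (V × Fin k) ⊕ (V × V × Fin 2))) ?_ ?_
      · intro y
        have hy : ((y : ↥((certH G χ S f).verts)) :
            (V × Fin k) ⊕ (V × V × Fin 2)) ∈ XC ∪ XB := (y : ↥((certH G χ S f).verts)).2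
        rcases hy with h | h
        · exact absurd h y.2
        · exact memXB_inr _ h
      · intro a b h
        exact h.1
    · intro T hT
      exact hoctlow T hT
    · intro v
      rw [Set.ncard_le_one_iff (Set.toFinite _)]
      intro u1 u2 hu1 hu2
      have e1 := reach_pairOf hu1.1
      have e2 := reach_pairOf hu2.1
      exact Subtype.ext (pinj _ hu1.2 _ hu2.2 (e1.trans e2.symm))
  exact ⟨⟨hocc, hoct, certH G χ S f, fun x hx => hx, hcert⟩, hXCcard⟩
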